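/- arXiv:1905.00848 — 2 statements merged into one kernel-verified Lean document; each statement's English description precedes it below -/
import Mathlib

section
/- Let g : 2^X → ℝ be submodular and let T be a random subset of a fixed set A ⊆ X where each element of A is included independently with probability p ∈ [0,1]. Then E[g(T)] ≥ (1 - p) · g(∅) + p · g(A). -/
theorem rse_aux {X : Type*} [Fintype X] [DecidableEq X] (A : Finset X) :
    ∀ g : Finset X → ℝ,
    (∀ S T : Finset X, g (S ∪ T) + g (S ∩ T) ≤ g S + g T) →
    ∀ p : ℝ, 0 ≤ p → p ≤ 1 →
    (1 - p) * g ∅ + p * g A ≤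
      ∑ T ∈ A.powerset, p ^ T.card * (1 - p) ^ (A.card - T.card) * g T := by
  induction A using Finset.induction with
  | empty =>
      intro g hsub p hp0 hp1
      simp only [Finset.powerset_empty, Finset.sum_singleton, Finset.card_empty, pow_zero,
        Nat.sub_zero, one_mul, mul_one]
      linarith
  | @insert a B ha IH =>
      intro g hsub p hp0 hp1
      rw [Finset.sum_powerset_insert ha]
      have hcard : (insert a B).card = B.card + 1 := Finset.card_insert_of_notMem ha
      have h1 : ∑ T ∈ B.powerset, p ^ T.card * (1 - p) ^ ((insert a B).card - T.card) * g T
          = (1 - p) * ∑ T ∈ B.powerset, p ^ T.card * (1 - p) ^ (B.card - T.card) * g T := by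
        rw [Finset.mul_sum]
        apply Finset.sum_congr rfl
        intro T hT
        have hle : T.card ≤ B.card := Finset.card_le_card (Finset.mem_powerset.mp hT)
        rw [hcard]
        have : B.card + 1 - T.card = (B.card - T.card) + 1 := by omega
        rw [this, pow_succ]
        ring
      have h2 : ∑ T ∈ B.powerset,
            p ^ (insert a T).card * (1 - p) ^ ((insert a B).card - (insert a T).card) * g (insert a T)
          = p * ∑ T ∈ B.powerset, p ^ T.card * (1 - p) ^ (B.card - T.card) * g (insert a T) := by
        rw [Finset.mul_sum]
        apply Finset.sum_congr rfl
        intro T hT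
        have haT : a ∉ T := fun h => ha (Finset.mem_powerset.mp hT h)
        rw [Finset.card_insert_of_notMem haT, hcard]
        have : B.card + 1 - (T.card + 1) = B.card - T.card := by omega
        rw [this, pow_succ]
        ring
      rw [h1, h2]
      have hsub' : ∀ S T : Finset X,
          (fun U => g (insert a U)) (S ∪ T) + (fun U => g (insert a U)) (S ∩ T)
            ≤ (fun U => g (insert a U)) S + (fun U => g (insert a U)) T := by
        intro S T
        simp only
        have hu : insert a (S ∪ T) = insert a S ∪ insert a T := by
          simp [Finset.insert_union, Finset.union_insert]
        have hi : insert a (S ∩ T) = insert a S ∩ insert a T := by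
          ext x; simp [Finset.mem_insert, Finset.mem_inter]; tauto
        rw [hu, hi]
        exact hsub _ _
      have hIH1 := IH g hsub p hp0 hp1
      have hIH2 := IH (fun U => g (insert a U)) hsub' p hp0 hp1
      have hkey : g (insert a B) + g ∅ ≤ g B + g (insert a ∅) := by
        have := hsub B (insert a ∅)
        have hu : B ∪ insert a ∅ = insert a B := by
          ext x; simp [Finset.mem_insert, Finset.mem_union]
        have hi : B ∩ insert a ∅ = ∅ := by
          ext x; simp [Finset.mem_inter, Finset.mem_insert]
          rintro hx rfl; exact ha hx
        rw [hu, hi] at this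
        linarith
      nlinarith [mul_nonneg hp0 (sub_nonneg.mpr hp1)]

theorem random_subset_expectation {X : Type*} [Fintype X] [DecidableEq X]
    (g : Finset X → ℝ)
    (hsub : ∀ S T : Finset X, g (S ∪ T) + g (S ∩ T) ≤ g S + g T)
    (A : Finset X) (p : ℝ) (hp0 : 0 ≤ p) (hp1 : p ≤ 1) :
    (1 - p) * g ∅ + p * g A ≤
      ∑ T ∈ A.powerset, p ^ T.card * (1 - p) ^ (A.card - T.card) * g T :=
  rse_aux A g hsub p hp0 hp1
end

section
/- Let v : 2^X → ℝ be a nonnegative submodular function with v(∅) = 0, let A ⊆ X, and let T be a random subset of A including each element independently with probability 1/2. Then E[v(T)] ≥ (1/4) · max_{S ⊆ A} v(S). -/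
theorem random_subset_quarter_approx {X : Type*} [Fintype X] [DecidableEq X]
    (v : Finset X → ℝ)
    (hzero : v ∅ = 0) (hnonneg : ∀ S : Finset X, 0 ≤ v S)
    (hsub : ∀ S T : Finset X, v (S ∪ T) + v (S ∩ T) ≤ v S + v T)
    (A : Finset X) :
    (1 / 4 : ℝ) * (A.powerset.sup' (Finset.powerset_nonempty A) v) ≤
      ∑ T ∈ A.powerset, (1 / 2 : ℝ) ^ A.card * v T := by
  obtain ⟨S, hSmem, hSeq⟩ := Finset.exists_mem_eq_sup' (Finset.powerset_nonempty A) v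
  rw [hSeq]
  have hSA : S ⊆ A := Finset.mem_powerset.mp hSmem
  set B := A \ S with hB
  have hBA : B ⊆ A := Finset.sdiff_subset
  set P := A.powerset with hP
  -- reindexing under symmetric difference involution
  have reindex : ∀ (C : Finset X), C ⊆ A → ∀ f : Finset X → ℝ,
      ∑ T ∈ P, f (symmDiff T C) = ∑ T ∈ P, f T := by
    intro C hC f
    refine Finset.sum_nbij' (fun T => symmDiff T C) (fun T => symmDiff T C) ?_ ?_ ?_ ?_ ?_
    · intro T hT
      rw [Finset.mem_powerset] at *
      exact le_trans symmDiff_le_sup (sup_le hT hC)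
    · intro T hT
      rw [Finset.mem_powerset] at *
      exact le_trans symmDiff_le_sup (sup_le hT hC)
    · intro T _; exact symmDiff_symmDiff_cancel_right C T
    · intro T _; exact symmDiff_symmDiff_cancel_right C T
    · intro T _; rfl
  -- step 1 : v(T ∪ S) ≤ v T + v (T ∆ S)
  have key1 : ∀ T ∈ P, v (T ∪ S) ≤ v T + v (symmDiff T S) := by
    intro T _
    have h := hsub T (symmDiff T S)
    have e1 : T ∪ symmDiff T S = T ∪ S := by
      ext a; simp [Finset.mem_symmDiff]; tauto
    have e2 : T ∩ symmDiff T S = T \ S := by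
      ext a; simp [Finset.mem_symmDiff]; tauto
    rw [e1, e2] at h
    have := hnonneg (T \ S)
    linarith
  have h1 : ∑ T ∈ P, v (T ∪ S) ≤ 2 * ∑ T ∈ P, v T := by
    calc ∑ T ∈ P, v (T ∪ S) ≤ ∑ T ∈ P, (v T + v (symmDiff T S)) :=
          Finset.sum_le_sum key1
      _ = ∑ T ∈ P, v T + ∑ T ∈ P, v (symmDiff T S) := Finset.sum_add_distrib
      _ = 2 * ∑ T ∈ P, v T := by rw [reindex S hSA v]; ring
  -- step 2 : v A + v S ≤ v (T ∪ S) + v ((T ∆ B) ∪ S)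
  have key2 : ∀ T ∈ P, v A + v S ≤ v (T ∪ S) + v (symmDiff T B ∪ S) := by
    intro T hT
    have hTA : T ⊆ A := Finset.mem_powerset.mp hT
    have h := hsub (T ∪ S) (symmDiff T B ∪ S)
    have e1 : (T ∪ S) ∪ (symmDiff T B ∪ S) = A := by
      ext a
      have h1 : a ∈ T → a ∈ A := fun h => hTA h
      have h2 : a ∈ S → a ∈ A := fun h => hSA h
      simp [Finset.mem_symmDiff, hB]; tauto
    have e2 : (T ∪ S) ∩ (symmDiff T B ∪ S) = S := by
      ext a
      have h1 : a ∈ T → a ∈ A := fun h => hTA h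
      simp [Finset.mem_symmDiff, hB]; tauto
    rw [e1, e2] at h
    linarith
  have h2 : (2 : ℝ) ^ A.card * (v A + v S) ≤ 2 * ∑ T ∈ P, v (T ∪ S) := by
    have hs : ∑ T ∈ P, (v A + v S) ≤
        ∑ T ∈ P, (v (T ∪ S) + v (symmDiff T B ∪ S)) := Finset.sum_le_sum key2
    have hcard : (P.card : ℝ) = (2 : ℝ) ^ A.card := by
      rw [hP, Finset.card_powerset]; push_cast; ring
    rw [Finset.sum_const, Finset.sum_add_distrib,
      reindex B hBA (fun T => v (T ∪ S))] at hs
    rw [nsmul_eq_mul, hcard] at hs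
    linarith
  have hvs : (2 : ℝ) ^ A.card * v S ≤ 4 * ∑ T ∈ P, v T := by
    have hA := hnonneg A
    have hpow : (0 : ℝ) < (2 : ℝ) ^ A.card := by positivity
    nlinarith
  rw [← Finset.mul_sum]
  have hhalf : ((1 : ℝ) / 2) ^ A.card = 1 / (2 : ℝ) ^ A.card := by
    rw [div_pow, one_pow]
  rw [hhalf]
  have hpow : (0 : ℝ) < (2 : ℝ) ^ A.card := by positivity
  rw [div_mul_eq_mul_div, one_mul, one_div, inv_mul_eq_div,
    div_le_div_iff₀ (by norm_num : (0:ℝ) < 4) hpow]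
  nlinarith
end
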